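/- Let r ≥ 2 and let k_1, …, k_r be variables with K = k_1 + ⋯ + k_r. Then the sum over all unordered increasing trees T on the label set {1,…,r} of the product ∏_{v=2}^{r} k_{f(v)} · (Σ_{u ∈ 𝔥_T(v)} k_u) equals k_1 k_2 ⋯ k_r · K^{r−2}, as an identity in ℚ[k_1,…,k_r]. -/

import Mathlib

open scoped Classical

/-- An unordered increasing tree on the label set `{1, …, r}` (encoded as `Fin r`,
with vertex `i : Fin r` representing the label `i+1`), given by its parent function:
the root (vertex `0`, i.e. label `1`) is fixed, and every other vertex has a
father with a strictly smaller label. -/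
def IsParent {r : ℕ} (f : Fin r → Fin r) : Prop :=
  ∀ v : Fin r, if v.val = 0 then f v = v else (f v).val < v.val

/-- The hook of the vertex `v`: the set consisting of `v` together with all of its
descendants (`u` is a descendant of `v` if iterating the parent function starting
from `u` reaches `v`). -/
noncomputable def hookF {r : ℕ} (f : Fin r → Fin r) (v : Fin r) : Finset (Fin r) :=
  Finset.univ.filter fun u => ∃ n, f^[n] u = v


open Finset

variable {m : ℕ}

def extP (f' : Fin m → Fin m) (q : Fin m) : Fin (m+1) → Fin (m+1) :=
  fun v => if h : v.val < m then (f' ⟨v.val, h⟩).castSucc else q.castSucc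

lemma extP_castSucc (f' : Fin m → Fin m) (q : Fin m) (u : Fin m) :
    extP f' q u.castSucc = (f' u).castSucc := by
  simp only [extP, Fin.coe_castSucc, u.isLt, dif_pos, Fin.eta]

lemma extP_last (f' : Fin m → Fin m) (q : Fin m) :
    extP f' q (Fin.last m) = q.castSucc := by
  simp [extP]

lemma extP_isParent (hm : 1 ≤ m) {f' : Fin m → Fin m} (hf : IsParent f') (q : Fin m) :
    IsParent (extP f' q) := by
  intro v
  by_cases h0 : v.val = 0
  · rw [if_pos h0]
    have hvm : v.val < m := by omega
    have := hf ⟨v.val, hvm⟩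
    rw [if_pos h0] at this
    simp only [extP, dif_pos hvm, this]
    apply Fin.ext
    simp [h0]
  · rw [if_neg h0]
    by_cases h : v.val < m
    · have := hf ⟨v.val, h⟩
      rw [if_neg h0] at this
      simpa [extP, dif_pos h] using this
    · have hv : v.val = m := by omega
      simp only [extP, dif_neg h]
      simp [hv, q.isLt]

lemma extP_iter_castSucc (f' : Fin m → Fin m) (q : Fin m) (n : ℕ) (u : Fin m) :
    (extP f' q)^[n] u.castSucc = (f'^[n] u).castSucc := by
  induction n generalizing u with
  | zero => rfl
  | succ n ih =>
    rw [Function.iterate_succ_apply, Function.iterate_succ_apply, extP_castSucc, ih]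

lemma extP_lt (f' : Fin m → Fin m) (q : Fin m) (v : Fin (m+1)) :
    (extP f' q v).val < m := by
  unfold extP
  split <;> simp [Fin.isLt]

lemma hook_last (f' : Fin m → Fin m) (q : Fin m) :
    hookF (extP f' q) (Fin.last m) = {Fin.last m} := by
  ext u
  simp only [hookF, mem_filter, mem_univ, true_and, mem_singleton]
  constructor
  · rintro ⟨n, hn⟩
    cases n with
    | zero => exact hn
    | succ n =>
      exfalso
      rw [Function.iterate_succ_apply'] at hn
      have := extP_lt f' q ((extP f' q)^[n] u)
      rw [hn] at this
      simp at this
  · rintro rfl; exact ⟨0, rfl⟩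

lemma mem_hook_castSucc (f' : Fin m → Fin m) (q : Fin m) (v u : Fin m) :
    u.castSucc ∈ hookF (extP f' q) v.castSucc ↔ u ∈ hookF f' v := by
  simp only [hookF, mem_filter, mem_univ, true_and]
  constructor
  · rintro ⟨n, hn⟩
    rw [extP_iter_castSucc] at hn
    exact ⟨n, Fin.castSucc_injective _ hn⟩
  · rintro ⟨n, hn⟩
    exact ⟨n, by rw [extP_iter_castSucc, hn]⟩

lemma last_mem_hook_castSucc (f' : Fin m → Fin m) (q : Fin m) (v : Fin m) :
    Fin.last m ∈ hookF (extP f' q) v.castSucc ↔ q ∈ hookF f' v := by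
  simp only [hookF, mem_filter, mem_univ, true_and]
  constructor
  · rintro ⟨n, hn⟩
    cases n with
    | zero =>
      exfalso
      have := congrArg Fin.val hn
      simp at this
      omega
    | succ n =>
      rw [Function.iterate_succ_apply, extP_last, extP_iter_castSucc] at hn
      exact ⟨n, Fin.castSucc_injective _ hn⟩
  · rintro ⟨n, hn⟩
    exact ⟨n + 1, by rw [Function.iterate_succ_apply, extP_last, extP_iter_castSucc, hn]⟩

lemma hook_castSucc (f' : Fin m → Fin m) (q : Fin m) (v : Fin m) :
    hookF (extP f' q) v.castSucc
      = (if q ∈ hookF f' v then {Fin.last m} else ∅) ∪ (hookF f' v).map (Fin.castSuccEmb) := by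
  ext u
  rcases Fin.eq_castSucc_or_eq_last u with ⟨w, rfl⟩ | rfl
  · rw [mem_hook_castSucc]
    simp only [mem_union, mem_map, Fin.castSuccEmb_apply]
    constructor
    · intro h
      exact Or.inr ⟨w, h, rfl⟩
    · rintro (h | ⟨w', hw', he⟩)
      · exfalso
        by_cases hq : q ∈ hookF f' v
        · rw [if_pos hq, mem_singleton] at h
          have := congrArg Fin.val h
          simp at this
          exact absurd this (Nat.ne_of_lt w.isLt)
        · rw [if_neg hq] at h; exact absurd h (notMem_empty _)
      · rwa [← Fin.castSucc_injective m he]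
  · rw [last_mem_hook_castSucc]
    simp only [mem_union, mem_map, Fin.castSuccEmb_apply]
    constructor
    · intro h
      left
      rw [if_pos h]
      exact mem_singleton_self _
    · rintro (h | ⟨w', _, he⟩)
      · by_cases hq : q ∈ hookF f' v
        · exact hq
        · rw [if_neg hq] at h; exact absurd h (notMem_empty _)
      · exfalso
        have h2 := congrArg Fin.val he
        simp at h2
        have := w'.isLt
        omega

variable {A : Type*} [CommRing A]

lemma hook_sum_castSucc (f' : Fin m → Fin m) (q : Fin m) (v : Fin m) (x : ℕ → A) :
    ∑ u ∈ hookF (extP f' q) v.castSucc, x u.val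
      = ∑ u ∈ hookF f' v, (x u.val + if u.val = q.val then x m else 0) := by
  rw [hook_castSucc, sum_union, sum_map]
  · have h1 : ∑ u ∈ (if q ∈ hookF f' v then ({Fin.last m} : Finset (Fin (m+1))) else ∅), x u.val
        = (if q ∈ hookF f' v then x m else 0) := by
      split <;> simp
    rw [h1, sum_add_distrib]
    have h2 : ∑ u ∈ hookF f' v, (if u.val = q.val then x m else 0)
        = if q ∈ hookF f' v then x m else 0 := by
      rw [← sum_filter]
      have : (hookF f' v).filter (fun u => u.val = q.val) = (hookF f' v).filter (fun u => u = q) := by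
        apply filter_congr
        intro u _
        simp [Fin.val_eq_val]
      rw [this, filter_eq']
      split <;> simp
    rw [h2]
    have h3 : ∀ u : Fin m, ((Fin.castSuccEmb : Fin m ↪ Fin (m+1)) u).val = u.val := fun u => rfl
    simp only [h3]
    ring
  · rw [disjoint_left]
    intro u hu hu2
    simp only [mem_map, Fin.castSuccEmb_apply] at hu2
    obtain ⟨w, _, rfl⟩ := hu2
    by_cases hq : q ∈ hookF f' v
    · rw [if_pos hq, mem_singleton] at hu
      have h4 := congrArg Fin.val hu
      have h5 := w.isLt
      have h6 : ∀ u : Fin m, ((Fin.castSuccEmb : Fin m ↪ Fin (m+1)) u).val = u.val := fun u => rfl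
      rw [Fin.val_castSucc, Fin.val_last] at h4
      omega
    · rw [if_neg hq] at hu; exact absurd hu (notMem_empty _)

noncomputable def G (m : ℕ) (k x : ℕ → A) : A :=
  ∑ T : {f : Fin m → Fin m // IsParent f},
    ∏ v ∈ Finset.univ.filter (fun v : Fin m => v.val ≠ 0),
      k (T.val v).val * ∑ u ∈ hookF T.val v, x u.val

lemma extP_bijective (hm : 1 ≤ m) :
    Function.Bijective (fun p : {f : Fin m → Fin m // IsParent f} × Fin m =>
      (⟨extP p.1.val p.2, extP_isParent hm p.1.2 p.2⟩ : {f : Fin (m+1) → Fin (m+1) // IsParent f})) := by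
  constructor
  · rintro ⟨⟨f1, h1⟩, q1⟩ ⟨⟨f2, h2⟩, q2⟩ h
    have he : extP f1 q1 = extP f2 q2 := congrArg Subtype.val h
    have hf : f1 = f2 := by
      funext u
      have := congrFun he u.castSucc
      rw [extP_castSucc, extP_castSucc] at this
      exact Fin.castSucc_injective _ this
    have hq : q1 = q2 := by
      have := congrFun he (Fin.last m)
      rw [extP_last, extP_last] at this
      exact Fin.castSucc_injective _ this
    simp [hf, hq]
  · rintro ⟨f, hf⟩
    have bound : ∀ u : Fin m, (f u.castSucc).val < m := by
      intro u
      have := hf u.castSucc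
      by_cases h0 : u.val = 0
      · rw [if_pos (by simpa using h0)] at this
        rw [this]
        simpa using u.isLt
      · rw [if_neg (by simpa using h0)] at this
        have := u.isLt
        simp only [Fin.coe_castSucc] at *
        omega
    set f' : Fin m → Fin m := fun u => ⟨(f u.castSucc).val, bound u⟩ with hf'
    have hpf' : IsParent f' := by
      intro v
      by_cases h0 : v.val = 0
      · rw [if_pos h0]
        have := hf v.castSucc
        rw [if_pos (by simpa using h0)] at this
        apply Fin.ext
        simp [hf', this]
      · rw [if_neg h0]
        have := hf v.castSucc
        rw [if_neg (by simpa using h0)] at this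
        simpa [hf'] using this
    have hlast : (f (Fin.last m)).val < m := by
      have := hf (Fin.last m)
      rw [if_neg (by simp; omega)] at this
      simpa using this
    refine ⟨⟨⟨f', hpf'⟩, ⟨(f (Fin.last m)).val, hlast⟩⟩, ?_⟩
    apply Subtype.ext
    funext v
    simp only
    by_cases h : v.val < m
    · have hv : v = (⟨v.val, h⟩ : Fin m).castSucc := by apply Fin.ext; simp
      rw [hv, extP_castSucc]
      apply Fin.ext
      simp [hf']
    · have hv : v = Fin.last m := by apply Fin.ext; simp; omega
      rw [hv, extP_last]
      apply Fin.ext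
      simp

lemma G_rec (hm : 1 ≤ m) (k x : ℕ → A) :
    G (m+1) k x
      = x m * ∑ q : Fin m, k q.val * G m k (fun j => x j + if j = q.val then x m else 0) := by
  rw [G]
  rw [← (Fintype.sum_bijective _ (extP_bijective hm)
    (fun p : {f : Fin m → Fin m // IsParent f} × Fin m =>
      ∏ v ∈ Finset.univ.filter (fun v : Fin (m+1) => v.val ≠ 0),
        k ((extP p.1.val p.2) v).val * ∑ u ∈ hookF (extP p.1.val p.2) v, x u.val)
    _ (fun p => rfl))]
  rw [Fintype.sum_prod_type]
  rw [mul_sum]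
  rw [Finset.sum_comm]
  apply Finset.sum_congr rfl
  intro q _
  rw [G, mul_sum, mul_sum]
  apply Finset.sum_congr rfl
  rintro ⟨f', hf'⟩ _
  simp only
  -- compute the product over Fin (m+1)
  rw [prod_filter, Fin.prod_univ_castSucc]
  have hlastterm : (if (Fin.last m).val ≠ 0 then
      k ((extP f' q) (Fin.last m)).val * ∑ u ∈ hookF (extP f' q) (Fin.last m), x u.val else 1)
      = k q.val * x m := by
    rw [if_pos (by simp; omega)]
    rw [extP_last, hook_last]
    simp
  rw [hlastterm]
  have hbody : ∀ v : Fin m, (if (v.castSucc).val ≠ 0 then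
      k ((extP f' q) v.castSucc).val * ∑ u ∈ hookF (extP f' q) v.castSucc, x u.val else 1)
      = (if v.val ≠ 0 then
          k (f' v).val * ∑ u ∈ hookF f' v, (x u.val + if u.val = q.val then x m else 0) else 1) := by
    intro v
    by_cases h0 : v.val = 0
    · simp [h0]
    · rw [if_pos (by simpa using h0), if_pos h0]
      rw [extP_castSucc, hook_sum_castSucc]
      simp
  simp only [hbody]
  rw [← prod_filter]
  ring

lemma telescope (k a : ℕ → A) (t : A) (n : ℕ) :
    ∀ j, j < n →
    ∑ q ∈ range (j+1), k q *
      ∏ v ∈ Ico 1 n, (a v + (if v < q then k v * t else 0) +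
        (if v = q then (∑ i ∈ range (v+1), k i) * t else 0))
    = (∑ i ∈ range (j+1), k i) *
      ∏ v ∈ Ico 1 n, (a v + if v ≤ j then k v * t else 0) := by
  intro j
  induction j with
  | zero =>
    intro _
    rw [range_one, sum_singleton, sum_singleton]
    congr 1
    apply prod_congr rfl
    intro v hv
    have h1 : ¬ v < 0 := Nat.not_lt_zero v
    have h2 : v ≠ 0 := by have := (mem_Ico.mp hv).1; omega
    have h3 : ¬ v ≤ 0 := by omega
    simp [h1, h2, h3]
  | succ j ih =>
    intro hj
    have hjn : j < n := by omega
    rw [sum_range_succ, ih hjn]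
    have hmem : j + 1 ∈ Ico 1 n := by simp; omega
    -- rewrite the new product
    have key : ∏ v ∈ Ico 1 n, (a v + (if v < j+1 then k v * t else 0) +
        (if v = j+1 then (∑ i ∈ range (v+1), k i) * t else 0))
        = ∏ v ∈ Ico 1 n, ((a v + if v ≤ j+1 then k v * t else 0) +
            (if v = j+1 then (∑ i ∈ range (j+1), k i) * t else 0)) := by
      apply prod_congr rfl
      intro v _
      by_cases hv : v = j + 1
      · subst hv
        simp only [lt_irrefl, if_false, if_pos rfl, le_refl, if_true, sum_range_succ]
        ring
      · have : (v < j + 1) ↔ (v ≤ j + 1) := by omega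
        simp [hv, this]
    rw [key]
    rw [← Finset.mul_prod_erase _ _ hmem, ← Finset.mul_prod_erase _ _ hmem,
        ← Finset.mul_prod_erase _ _ hmem]
    have e1 : ∏ v ∈ (Ico 1 n).erase (j+1), ((a v + if v ≤ j+1 then k v * t else 0) +
            (if v = j+1 then (∑ i ∈ range (j+1), k i) * t else 0))
        = ∏ v ∈ (Ico 1 n).erase (j+1), (a v + if v ≤ j then k v * t else 0) := by
      apply prod_congr rfl
      intro v hv
      have hne : v ≠ j + 1 := (mem_erase.mp hv).1
      have : (v ≤ j + 1) ↔ (v ≤ j) := by omega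
      simp [hne, this]
    have e2 : ∏ v ∈ (Ico 1 n).erase (j+1), (a v + if v ≤ j+1 then k v * t else 0)
        = ∏ v ∈ (Ico 1 n).erase (j+1), (a v + if v ≤ j then k v * t else 0) := by
      apply prod_congr rfl
      intro v hv
      have hne : v ≠ j + 1 := (mem_erase.mp hv).1
      have : (v ≤ j + 1) ↔ (v ≤ j) := by omega
      simp [hne, this]
    rw [e1, e2]
    simp only [if_pos (le_refl (j+1)), if_pos rfl, if_neg (by omega : ¬ j + 1 ≤ j)]
    rw [sum_range_succ (f := k) (n := j+1)]
    simp only [if_true]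
    ring

lemma G_one (k x : ℕ → A) : G 1 k x = 1 := by
  rw [G]
  have h1 : (Finset.univ.filter (fun v : Fin 1 => v.val ≠ 0)) = ∅ := by
    ext v
    simp [Fin.val_eq_zero]
  simp only [h1, prod_empty]
  rw [sum_const, card_univ]
  have h2 : Fintype.card {f : Fin 1 → Fin 1 // IsParent f} = 1 := by
    haveI : Unique {f : Fin 1 → Fin 1 // IsParent f} := {
      default := ⟨id, by
        intro v
        have : v.val = 0 := by omega
        rw [if_pos this]
        rfl⟩
      uniq := fun a => Subtype.ext (funext fun v => Subsingleton.elim _ _) }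
    exact Fintype.card_unique
  rw [h2]
  simp

theorem G_closed (k : ℕ → A) : ∀ m, 1 ≤ m → ∀ x : ℕ → A,
    G (m+1) k x = k 0 * x m *
      ∏ v ∈ Ico 1 m, ((∑ i ∈ range (v+1), k i) * x v + k v * ∑ u ∈ Ico (v+1) (m+1), x u) := by
  refine Nat.le_induction ?_ ?_
  · intro x
    rw [G_rec (le_refl 1), Fin.sum_univ_one, G_one]
    simp [Ico_self]
    ring
  · intro m hm ih x
    set t := x (m+1) with ht
    set a : ℕ → A := fun v =>
      (∑ i ∈ range (v+1), k i) * x v + k v * ∑ u ∈ Ico (v+1) (m+1), x u with ha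
    rw [G_rec (by omega)]
    have key : ∀ q : Fin (m+1),
        k q.val * G (m+1) k (fun j => x j + if j = q.val then x (m+1) else 0)
        = k 0 * (x m + if m = q.val then t else 0) *
          (k q.val * ∏ v ∈ Ico 1 m, (a v + (if v < q.val then k v * t else 0) +
            (if v = q.val then (∑ i ∈ range (v+1), k i) * t else 0))) := by
      intro q
      rw [ih]
      have hprod : ∏ v ∈ Ico 1 m, ((∑ i ∈ range (v+1), k i) * (x v + if v = q.val then x (m+1) else 0)
            + k v * ∑ u ∈ Ico (v+1) (m+1), (x u + if u = q.val then x (m+1) else 0))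
          = ∏ v ∈ Ico 1 m, (a v + (if v < q.val then k v * t else 0) +
            (if v = q.val then (∑ i ∈ range (v+1), k i) * t else 0)) := by
        apply prod_congr rfl
        intro v hv
        have hv' := mem_Ico.mp hv
        rw [sum_add_distrib, Finset.sum_ite_eq' (Ico (v+1) (m+1)) q.val (fun _ => x (m+1))]
        have hq := q.isLt
        rw [ha, ht]
        by_cases h1 : v = q.val
        · have h2 : ¬ (v < q.val) := by omega
          have h3 : q.val ∉ Ico (v+1) (m+1) := by simp; omega
          rw [if_pos h1, if_neg h2, if_pos h1, if_neg h3]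
          ring
        · rw [if_neg h1, if_neg h1]
          by_cases h2 : v < q.val
          · have h3 : q.val ∈ Ico (v+1) (m+1) := by simp; omega
            rw [if_pos h2, if_pos h3]
            ring
          · have h3 : q.val ∉ Ico (v+1) (m+1) := by simp; omega
            rw [if_neg h2, if_neg h3]
            ring
      rw [hprod]
      ring
    rw [Fintype.sum_congr _ _ key]
    rw [Fin.sum_univ_eq_sum_range (fun j => k 0 * (x m + if m = j then t else 0) *
      (k j * ∏ v ∈ Ico 1 m, (a v + (if v < j then k v * t else 0) +
        (if v = j then (∑ i ∈ range (v+1), k i) * t else 0)))) (m+1)]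
    rw [sum_range_succ]
    have hlast : k 0 * (x m + if m = m then t else 0) *
        (k m * ∏ v ∈ Ico 1 m, (a v + (if v < m then k v * t else 0) +
          (if v = m then (∑ i ∈ range (v+1), k i) * t else 0)))
        = k 0 * (x m + t) * (k m * ∏ v ∈ Ico 1 m, (a v + k v * t)) := by
      rw [if_pos rfl]
      have hp : ∏ v ∈ Ico 1 m, ((a v + if v < m then k v * t else 0) +
          if v = m then (∑ i ∈ range (v + 1), k i) * t else 0)
          = ∏ v ∈ Ico 1 m, (a v + k v * t) := by
        apply prod_congr rfl
        intro v hv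
        have hv' := mem_Ico.mp hv
        rw [if_pos hv'.2, if_neg (by omega : v ≠ m)]
        ring
      rw [hp]
    rw [hlast]
    have hmain : ∑ j ∈ range m, k 0 * (x m + if m = j then t else 0) *
        (k j * ∏ v ∈ Ico 1 m, (a v + (if v < j then k v * t else 0) +
          (if v = j then (∑ i ∈ range (v+1), k i) * t else 0)))
        = k 0 * x m * ∑ q ∈ range m, k q * ∏ v ∈ Ico 1 m, (a v + (if v < q then k v * t else 0) +
          (if v = q then (∑ i ∈ range (v+1), k i) * t else 0)) := by
      rw [mul_sum]
      apply sum_congr rfl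
      intro j hj
      rw [if_neg (by have := mem_range.mp hj; omega : ¬ m = j)]
      ring
    rw [hmain]
    have htel := telescope k a t m (m-1) (by omega)
    rw [Nat.sub_add_cancel hm] at htel
    rw [htel]
    have hbprod : ∏ v ∈ Ico 1 m, (a v + if v ≤ m - 1 then k v * t else 0)
        = ∏ v ∈ Ico 1 m, (a v + k v * t) := by
      apply prod_congr rfl
      intro v hv
      have hv' := mem_Ico.mp hv
      rw [if_pos (by omega)]
    rw [hbprod]
    -- now the right-hand side
    rw [Finset.prod_Ico_succ_top (by omega : 1 ≤ m)]
    have hrhs : ∏ v ∈ Ico 1 m, ((∑ i ∈ range (v+1), k i) * x v + k v * ∑ u ∈ Ico (v+1) (m+1+1), x u)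
        = ∏ v ∈ Ico 1 m, (a v + k v * t) := by
      apply prod_congr rfl
      intro v hv
      have hv' := mem_Ico.mp hv
      rw [Finset.sum_Ico_succ_top (by omega : v + 1 ≤ m + 1)]
      rw [ha, ht]
      ring
    rw [hrhs]
    have hlastf : (∑ i ∈ range (m+1), k i) * x m + k m * ∑ u ∈ Ico (m+1) (m+1+1), x u
        = (∑ i ∈ range (m+1), k i) * x m + k m * t := by
      rw [Finset.sum_Ico_succ_top (by omega : m + 1 ≤ m + 1), Ico_self, sum_empty, ht]
      ring
    rw [hlastf, sum_range_succ]
    ring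


/-- For `r ≥ 2`, the sum over all unordered increasing trees `T` on `{1, …, r}` of the
product `∏_{v=2}^{r} k_{f(v)} · (Σ_{u ∈ 𝔥_T(v)} k_u)` equals `k_1 ⋯ k_r · K^{r−2}`
where `K = k_1 + ⋯ + k_r`, as an identity in `ℚ[k_1, …, k_r]`. -/
theorem stmt3 (r : ℕ) (hr : 2 ≤ r) :
    ∑ T : {f : Fin r → Fin r // IsParent f},
        ∏ v ∈ Finset.univ.filter (fun v : Fin r => v.val ≠ 0),
          MvPolynomial.X (T.val v) *
            (∑ u ∈ hookF T.val v, (MvPolynomial.X u : MvPolynomial (Fin r) ℚ))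
      = (∏ i : Fin r, MvPolynomial.X i) * (∑ i : Fin r, MvPolynomial.X i) ^ (r - 2) := by
  obtain ⟨m, rfl⟩ : ∃ m, r = m + 1 := ⟨r - 1, by omega⟩
  have hm : 1 ≤ m := by omega
  set k : ℕ → MvPolynomial (Fin (m+1)) ℚ :=
    fun i => if h : i < m + 1 then MvPolynomial.X ⟨i, h⟩ else 0 with hk
  have hkf : ∀ i : Fin (m+1), k i.val = MvPolynomial.X i := by
    intro i
    rw [hk]
    simp only [dif_pos i.isLt, Fin.eta]
  have hG : (∑ T : {f : Fin (m+1) → Fin (m+1) // IsParent f},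
        ∏ v ∈ Finset.univ.filter (fun v : Fin (m+1) => v.val ≠ 0),
          MvPolynomial.X (T.val v) *
            (∑ u ∈ hookF T.val v, (MvPolynomial.X u : MvPolynomial (Fin (m+1)) ℚ)))
      = G (m+1) k k := by
    rw [G]
    apply sum_congr rfl
    intro T _
    apply prod_congr rfl
    intro v _
    rw [hkf]
    congr 1
    apply sum_congr rfl
    intro u _
    rw [hkf]
  rw [hG, G_closed k m hm k]
  have hS : ∀ v, v < m → (∑ i ∈ range (v+1), k i) + (∑ u ∈ Ico (v+1) (m+1), k u)
      = ∑ i : Fin (m+1), MvPolynomial.X i := by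
    intro v hv
    rw [range_eq_Ico, sum_Ico_consecutive k (by omega) (by omega), ← range_eq_Ico]
    rw [← Fin.sum_univ_eq_sum_range k (m+1)]
    exact sum_congr rfl fun i _ => hkf i
  have hfac : ∏ v ∈ Ico 1 m, ((∑ i ∈ range (v+1), k i) * k v + k v * ∑ u ∈ Ico (v+1) (m+1), k u)
      = (∏ v ∈ Ico 1 m, k v) * (∑ i : Fin (m+1), MvPolynomial.X i) ^ (m - 1) := by
    have : ∏ v ∈ Ico 1 m, (k v * (∑ i : Fin (m+1), MvPolynomial.X i)) =
        ∏ v ∈ Ico 1 m, ((∑ i ∈ range (v+1), k i) * k v + k v * ∑ u ∈ Ico (v+1) (m+1), k u) := by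
      apply prod_congr rfl
      intro v hv
      have hv' := mem_Ico.mp hv
      rw [← hS v hv'.2]
      ring
    rw [← this, prod_mul_distrib, prod_const, Nat.card_Ico]
  rw [hfac]
  have hprod : (∏ i : Fin (m+1), (MvPolynomial.X i : MvPolynomial (Fin (m+1)) ℚ))
      = k 0 * k m * ∏ v ∈ Ico 1 m, k v := by
    have h1 : (∏ i : Fin (m+1), (MvPolynomial.X i : MvPolynomial (Fin (m+1)) ℚ))
        = ∏ i ∈ range (m+1), k i := by
      rw [← Fin.prod_univ_eq_prod_range k (m+1)]
      exact (prod_congr rfl fun i _ => hkf i).symm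
    rw [h1, prod_range_succ, range_eq_Ico,
      Finset.prod_eq_prod_Ico_succ_bot (by omega : 0 < m) k]
    ring
  rw [hprod]
  have : m + 1 - 2 = m - 1 := by omega
  rw [this]
  ring
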